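/- Let R be a ring with proper involution and let m be a positive integer. An element a ∈ R has an m-weak group inverse if and only if a has a Drazin inverse d and there exist x ∈ R and n ∈ ℕ such that x R = d R (i.e. x = d u and d = x v for some u, v ∈ R), ((a^m)^* a^(m+1) x)^* = (a^m)^* a^(m+1) x, and a^n = a x a^n. In this case, such an x is an m-weak group inverse of a. -/
import Mathlib


/-- `z` is an `m`-weak group inverse of `a`. -/
def IsMWGI {R : Type*} [Ring R] [StarRing R] (m : ℕ) (a z : R) : Prop :=
  a * z ^ 2 = z ∧ ∃ k : ℕ, z * a ^ (k + 1) = a ^ k ∧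
    star (a ^ k) * a ^ (m + 1) * z = star (a ^ k) * a ^ m

/-- `w` is a weak group inverse of `b`. -/
def IsWGI {R : Type*} [Ring R] [StarRing R] (b w : R) : Prop :=
  b * w ^ 2 = w ∧ star (star b * b ^ 2 * w) = star b * b ^ 2 * w ∧
    ∃ k : ℕ, b ^ k = w * b ^ (k + 1)

/-- `x` is a group inverse of `u`. -/
def IsGroupInv {R : Type*} [Ring R] (u x : R) : Prop :=
  u * x ^ 2 = x ∧ u * x = x * u ∧ u = u ^ 2 * x

/-- `d` is a Drazin inverse of `a`. -/
def IsDrazin {R : Type*} [Ring R] (a d : R) : Prop :=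
  a * d ^ 2 = d ∧ a * d = d * a ∧ ∃ k : ℕ, a ^ k = d * a ^ (k + 1)

/-- `y` is a core-EP inverse of `a`. -/
def IsCoreEP {R : Type*} [Ring R] [StarRing R] (a y : R) : Prop :=
  a * y ^ 2 = y ∧ star (a * y) = a * y ∧ ∃ k : ℕ, a ^ k = y * a ^ (k + 1)

private lemma aux_azsq {R : Type*} [Ring R] {a z : R} (h : a * z ^ 2 = z) (j : ℕ) :
    a * z ^ (j + 1 + 1) = z ^ (j + 1) := by
  rw [pow_succ' z (j + 1), pow_succ' z j, ← mul_assoc, ← mul_assoc, mul_assoc a z z,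
    ← pow_two z, h]

private lemma aux_L1 {R : Type*} [Ring R] {a z : R} (h : a * z ^ 2 = z) :
    ∀ j : ℕ, a ^ j * z ^ (j + 1) = z
  | 0 => by simp
  | (n + 1) => by
      rw [pow_succ a n, mul_assoc, aux_azsq h n]
      exact aux_L1 h n

private lemma aux_zapow {R : Type*} [Ring R] {a z : R} {k : ℕ}
    (h : z * a ^ (k + 1) = a ^ k) : ∀ i : ℕ, z * a ^ (k + i + 1) = a ^ (k + i)
  | 0 => by simpa using h
  | (i + 1) => by
      show z * a ^ (k + i + 1 + 1) = a ^ (k + i + 1)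
      rw [pow_succ a (k + i + 1), ← mul_assoc, aux_zapow h i, ← pow_succ]

private lemma aux_L3 {R : Type*} [Ring R] {a z : R} {k : ℕ}
    (h : z * a ^ (k + 1) = a ^ k) : ∀ i : ℕ, z ^ i * a ^ (k + i) = a ^ k
  | 0 => by simp
  | (i + 1) => by
      show z ^ (i + 1) * a ^ (k + i + 1) = a ^ k
      rw [pow_succ z i, mul_assoc, aux_zapow h i]
      exact aux_L3 h i

private lemma aux_dpow {R : Type*} [Ring R] {a d : R} {j : ℕ}
    (hj : a ^ j = d * a ^ (j + 1)) : ∀ i : ℕ, a ^ (j + i) = d * a ^ (j + i + 1)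
  | 0 => by simpa using hj
  | (i + 1) => by
      show a ^ (j + i + 1) = d * a ^ (j + i + 1 + 1)
      rw [pow_succ a (j + i), aux_dpow hj i, mul_assoc, ← pow_succ]

private lemma aux_axpow {R : Type*} [Ring R] {a x : R} {n : ℕ}
    (hn : a ^ n = a * x * a ^ n) : ∀ i : ℕ, a ^ (n + i) = a * x * a ^ (n + i)
  | 0 => by simpa using hn
  | (i + 1) => by
      show a ^ (n + i + 1) = a * x * a ^ (n + i + 1)
      rw [pow_succ a (n + i)]
      conv_lhs => rw [aux_axpow hn i]
      rw [mul_assoc]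

private lemma aux_adpow {R : Type*} [Ring R] {a d : R}
    (hdd : a * d ^ 2 = d) : ∀ i : ℕ, a ^ (i + 1) * d ^ (i + 1) = a * d
  | 0 => by simp
  | (i + 1) => by
      rw [pow_succ a (i + 1), mul_assoc, aux_azsq hdd i]
      exact aux_adpow hdd i

theorem mwgi_iff_range_cond {R : Type*} [Ring R] [StarRing R]
    (hproper : ∀ x : R, star x * x = 0 → x = 0)
    (m : ℕ) (hm : 0 < m) (a : R) :
    ((∃ z : R, IsMWGI m a z) ↔
      ∃ d : R, IsDrazin a d ∧ ∃ x : R, ∃ n : ℕ,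
        (∃ u : R, x = d * u) ∧ (∃ v : R, d = x * v) ∧
        star (star (a ^ m) * a ^ (m + 1) * x) = star (a ^ m) * a ^ (m + 1) * x ∧
        a ^ n = a * x * a ^ n) ∧
      ∀ d x : R, ∀ n : ℕ, IsDrazin a d →
        (∃ u : R, x = d * u) → (∃ v : R, d = x * v) →
        star (star (a ^ m) * a ^ (m + 1) * x) = star (a ^ m) * a ^ (m + 1) * x →
        a ^ n = a * x * a ^ n →
        IsMWGI m a x := by
  have backward : ∀ d x : R, ∀ n : ℕ, IsDrazin a d →
      (∃ u : R, x = d * u) → (∃ v : R, d = x * v) →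
      star (star (a ^ m) * a ^ (m + 1) * x) = star (a ^ m) * a ^ (m + 1) * x →
      a ^ n = a * x * a ^ n →
      IsMWGI m a x := by
    rintro d x n ⟨hdd, hc, j, hj⟩ ⟨u, hu⟩ ⟨v, hv⟩ hsym hn
    have h2 : a * (d * d) = d := by rw [← pow_two]; exact hdd
    have hex : a * d * x = x := by
      rw [hu, mul_assoc a d, ← mul_assoc d d u, ← mul_assoc a, h2]
    have hax1 : a ^ (n + 1) = a * x * a ^ (n + 1) := aux_axpow hn 1
    have had1 : a ^ (n + 1) * d ^ (n + 1) = a * d := aux_adpow hdd n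
    have haxe : a * x * (a * d) = a * d := by
      rw [← had1, ← mul_assoc (a * x), ← hax1]
    have hdax : d * (a * x) = x := by
      rw [← mul_assoc, ← hc]; exact hex
    have h5 : d * (a * d) = d := by rw [← mul_assoc, ← hc, mul_assoc, h2]
    have hxe : x * (a * d) = d := by
      have h6 : d * (a * x * (a * d)) = x * (a * d) := by
        rw [← mul_assoc d, hdax]
      rw [← h6, haxe]; exact h5
    refine ⟨?_, m + n + j + 1, ?_, ?_⟩
    · rw [pow_two]
      calc a * (x * x) = a * (x * (a * d * x)) := by rw [hex]
        _ = a * x * (a * d) * x := by simp only [mul_assoc]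
        _ = (a * d) * x := by rw [haxe]
        _ = x := hex
    · have key1 : ∀ i : ℕ, x * a ^ (j + i + 1) = a ^ (j + i) := by
        intro i
        have e0 : a ^ (j + i) = d * a ^ (j + i + 1) := aux_dpow hj i
        have e1 : a ^ (j + i + 1) = a * d * a ^ (j + i + 1) := by
          conv_lhs => rw [pow_succ' a (j + i), e0]
          rw [← mul_assoc]
        conv_lhs => rw [e1]
        rw [← mul_assoc x, hxe]
        exact e0.symm
      have hsp : m + n + j + 1 = j + (m + n) + 1 := by omega
      rw [hsp]
      exact key1 (m + n + 1)
    · have h6 : a * x * a ^ (n + j + 1) = a ^ (n + j + 1) := (aux_axpow hn (j + 1)).symm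
      have T1l : star (a ^ m) * a ^ (m + 1) * x * a ^ (n + j + 1)
          = star (a ^ m) * a ^ m * a ^ (n + j + 1) := by
        calc star (a ^ m) * a ^ (m + 1) * x * a ^ (n + j + 1)
            = star (a ^ m) * (a ^ m * (a * x * a ^ (n + j + 1))) := by
              rw [pow_succ a m]; simp only [mul_assoc]
          _ = star (a ^ m) * (a ^ m * a ^ (n + j + 1)) := by rw [h6]
          _ = star (a ^ m) * a ^ m * a ^ (n + j + 1) := by rw [mul_assoc]
      have l1 : star (star (a ^ m) * a ^ (m + 1) * x * a ^ (n + j + 1))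
          = star (a ^ (n + j + 1)) * (star (a ^ m) * a ^ (m + 1) * x) := by
        rw [star_mul, hsym]
      have l2 : star (star (a ^ m) * a ^ m * a ^ (n + j + 1))
          = star (a ^ (n + j + 1)) * (star (a ^ m) * a ^ m) := by
        rw [star_mul, star_mul, star_star]
      have T3 := congrArg star T1l
      rw [l1, l2] at T3
      have hsplit : (a : R) ^ (m + n + j + 1) = a ^ m * a ^ (n + j + 1) := by
        rw [← pow_add]
        congr 1
        omega
      rw [hsplit, star_mul]
      simp only [mul_assoc]
      simp only [mul_assoc] at T3
      exact T3
  refine ⟨⟨?_, ?_⟩, backward⟩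
  · rintro ⟨z, hz1, k0, hz2, hz3⟩
    have hz2' : z * a ^ (k0 + 1 + 1) = a ^ (k0 + 1) := by
      rw [pow_succ a (k0 + 1), ← mul_assoc, hz2, ← pow_succ]
    have hz3' : star (a ^ (k0 + 1)) * a ^ (m + 1) * z = star (a ^ (k0 + 1)) * a ^ m := by
      have hz3n : star (a ^ k0) * (a ^ (m + 1) * z) = star (a ^ k0) * a ^ m := by
        rw [← mul_assoc]; exact hz3
      rw [pow_succ a k0, star_mul]
      simp only [mul_assoc]
      rw [hz3n]
    -- the Drazin inverse
    refine ⟨z ^ (k0 + 1 + 1) * a ^ (k0 + 1), ⟨?_, ?_, k0 + 1, ?_⟩, z, k0 + 1,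
      ⟨a ^ (k0 + 1 + 1) * z ^ (k0 + 1 + 1), ?_⟩, ⟨z ^ (k0 + 1) * a ^ (k0 + 1), ?_⟩, ?_, ?_⟩
    · -- a * d^2 = d
      have F1 : a * (z ^ (k0 + 1 + 1) * a ^ (k0 + 1)) = z ^ (k0 + 1) * a ^ (k0 + 1) := by
        rw [← mul_assoc, aux_azsq hz1 k0]
      rw [pow_two, ← mul_assoc, F1, mul_assoc, ← mul_assoc (a ^ (k0 + 1)),
        aux_L1 hz1 (k0 + 1), pow_succ z (k0 + 1), mul_assoc]
    · -- a * d = d * a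
      have F1 : a * (z ^ (k0 + 1 + 1) * a ^ (k0 + 1)) = z ^ (k0 + 1) * a ^ (k0 + 1) := by
        rw [← mul_assoc, aux_azsq hz1 k0]
      have F2 : (z ^ (k0 + 1 + 1) * a ^ (k0 + 1)) * a = z ^ (k0 + 1) * a ^ (k0 + 1) := by
        rw [mul_assoc, ← pow_succ, pow_succ z (k0 + 1), mul_assoc, hz2']
      rw [F1, F2]
    · -- a^(k0+1) = d * a^(k0+1+1)
      rw [mul_assoc, ← pow_add, aux_L3 hz2' (k0 + 1 + 1)]
    · -- z = d * u
      rw [mul_assoc, ← mul_assoc (a ^ (k0 + 1)), ← pow_add, ← mul_assoc,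
        aux_L3 hz2' (k0 + 1 + 1), aux_L1 hz1 (k0 + 1)]
    · -- d = z * v
      rw [← mul_assoc, ← pow_succ']
    · -- the star condition
      have hT : star (a ^ m) * a ^ (m + 1) * z = star (a ^ m) * a ^ m * (a * z) := by
        rw [pow_succ a m]; simp only [mul_assoc]
      have hR1 : star (a ^ (k0 + 1)) * (a ^ m * (a * z)) = star (a ^ (k0 + 1)) * a ^ m := by
        calc star (a ^ (k0 + 1)) * (a ^ m * (a * z))
            = star (a ^ (k0 + 1)) * a ^ (m + 1) * z := by
              rw [pow_succ a m]; simp only [mul_assoc]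
          _ = star (a ^ (k0 + 1)) * a ^ m := hz3'
      have s2 : a ^ m * (a * z) = a ^ (k0 + 1) * (a ^ (m + 1) * z ^ (k0 + 1 + 1)) := by
        calc a ^ m * (a * z)
            = a ^ m * (a * (a ^ (k0 + 1) * z ^ (k0 + 1 + 1))) := by
              rw [aux_L1 hz1 (k0 + 1)]
          _ = (a ^ m * a) * (a ^ (k0 + 1) * z ^ (k0 + 1 + 1)) := by
              simp only [mul_assoc]
          _ = a ^ (m + 1) * (a ^ (k0 + 1) * z ^ (k0 + 1 + 1)) := by rw [← pow_succ]
          _ = (a ^ (m + 1) * a ^ (k0 + 1)) * z ^ (k0 + 1 + 1) := by rw [mul_assoc]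
          _ = a ^ ((m + 1) + (k0 + 1)) * z ^ (k0 + 1 + 1) := by rw [← pow_add]
          _ = a ^ ((k0 + 1) + (m + 1)) * z ^ (k0 + 1 + 1) := by
              rw [Nat.add_comm (m + 1) (k0 + 1)]
          _ = a ^ (k0 + 1) * (a ^ (m + 1) * z ^ (k0 + 1 + 1)) := by
              rw [pow_add, mul_assoc]
      have e : star (a * z) * star (a ^ m)
          = star (a ^ (m + 1) * z ^ (k0 + 1 + 1)) * star (a ^ (k0 + 1)) := by
        rw [← star_mul, ← star_mul, s2]
      have hC : star (a * z) * (star (a ^ m) * (a ^ m * (a * z)))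
          = star (a * z) * (star (a ^ m) * a ^ m) := by
        rw [← mul_assoc, e, mul_assoc, hR1, ← mul_assoc, ← e, mul_assoc]
      have h9 : star (star (a * z) * (star (a ^ m) * a ^ m))
          = (star (a ^ m) * a ^ m) * (a * z) := by
        rw [star_mul, star_star, star_mul, star_star]
      have h10 : star (star (a * z) * (star (a ^ m) * (a ^ m * (a * z))))
          = star (a * z) * (star (a ^ m) * (a ^ m * (a * z))) := by
        simp only [star_mul, star_star, mul_assoc]
      have h12 : star (a * z) * (star (a ^ m) * a ^ m)
          = (star (a ^ m) * a ^ m) * (a * z) := by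
        rw [← h9, ← hC, h10]
      have hA : star (star (a ^ m) * a ^ m) = star (a ^ m) * a ^ m := by
        rw [star_mul, star_star]
      rw [hT, star_mul, hA]
      rw [← mul_assoc] at h12
      simp only [mul_assoc] at h12 ⊢
      exact h12
    · -- a^n = a * x * a^n
      conv_lhs => rw [← hz2', ← hz1]
      rw [pow_two, ← mul_assoc a z z, mul_assoc (a * z), hz2']
  · rintro ⟨d, hd, x, n, hu, hv, hsym, hn⟩
    exact ⟨x, backward d x n hd hu hv hsym hn⟩
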